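/- arXiv:1907.11239 — 7 statements merged into one kernel-verified Lean document; each statement's English description precedes it below -/
import Mathlib

section
/- Let c > 0, let 0 ≤ β < 1, and let q : ℝ → EuclideanSpace ℝ (Fin 3) satisfy ‖q t₁ − q t₂‖ ≤ β·c·|t₁ − t₂| for all t₁, t₂ ∈ ℝ (a subluminal Lipschitz trajectory). Then for every time t ∈ ℝ and every point s ∈ EuclideanSpace ℝ (Fin 3) there exists a unique retarded time t_r ∈ ℝ such that c·(t − t_r) = ‖s − q t_r‖; moreover this t_r satisfies t_r ≤ t. -/
/-- **Existence and uniqueness of the retarded time.**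
For a subluminal Lipschitz trajectory `q` (with Lipschitz constant `β·c`, `β < 1`),
for every time `t` and field point `s` there is a unique retarded time `t_r` with
`c·(t − t_r) = ‖s − q t_r‖`, and any such retarded time satisfies `t_r ≤ t`. -/
theorem retarded_time_exists_unique
    (c β : ℝ) (hc : 0 < c) (hβ0 : 0 ≤ β) (hβ1 : β < 1)
    (q : ℝ → EuclideanSpace ℝ (Fin 3))
    (hq : ∀ t₁ t₂ : ℝ, ‖q t₁ - q t₂‖ ≤ β * c * |t₁ - t₂|)
    (t : ℝ) (s : EuclideanSpace ℝ (Fin 3)) :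
    (∃! tr : ℝ, c * (t - tr) = ‖s - q tr‖) ∧
      ∀ tr : ℝ, c * (t - tr) = ‖s - q tr‖ → tr ≤ t := by
  have hK0 : 0 ≤ β * c := mul_nonneg hβ0 hc.le
  -- q is Lipschitz, hence continuous
  have hlip : LipschitzWith ⟨β * c, hK0⟩ q := by
    apply LipschitzWith.of_dist_le_mul
    intro x y
    exact (by simpa [dist_eq_norm, Real.dist_eq] using hq x y : dist (q x) (q y) ≤ β * c * dist x y)
  have hqc : Continuous q := hlip.continuous
  set g : ℝ → ℝ := fun tr => c * (t - tr) - ‖s - q tr‖ with hg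
  have hgc : Continuous g := by
    apply Continuous.sub
    · fun_prop
    · exact (continuous_const.sub hqc).norm
  -- strict antitonicity
  have hmono : ∀ x y : ℝ, x < y → g y < g x := by
    intro x y hxy
    have h1 : ‖s - q x‖ - ‖s - q y‖ ≤ ‖q y - q x‖ := by
      have := norm_sub_norm_le (s - q x) (s - q y)
      have heq : (s - q x) - (s - q y) = q y - q x := by abel
      rwa [heq] at this
    have h2 : ‖q y - q x‖ ≤ β * c * (y - x) := by
      have := hq y x
      rwa [abs_of_pos (by linarith)] at this
    have hβc : β * c < c := by nlinarith
    simp only [hg]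
    nlinarith
  -- the anchor point
  set N := ‖s - q t‖ with hN
  have hN0 : 0 ≤ N := norm_nonneg _
  have h1β : 0 < 1 - β := by linarith
  have hc1β : 0 < c * (1 - β) := mul_pos hc h1β
  set a := t - N / (c * (1 - β)) with ha
  have hat : a ≤ t := by
    have : 0 ≤ N / (c * (1 - β)) := div_nonneg hN0 hc1β.le
    rw [ha]; linarith
  have hcta : c * (t - a) = N / (1 - β) := by
    rw [ha]
    field_simp
    ring
  have hga : 0 ≤ g a := by
    have htri : ‖s - q a‖ ≤ N + ‖q t - q a‖ := by
      have := norm_sub_le_norm_sub_add_norm_sub s (q t) (q a)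
      simpa [hN] using this
    have h2 : ‖q t - q a‖ ≤ β * c * (t - a) := by
      have := hq t a
      rwa [abs_of_nonneg (by linarith)] at this
    have hbound : ‖s - q a‖ ≤ N + β * (N / (1 - β)) := by
      have : β * c * (t - a) = β * (N / (1 - β)) := by
        rw [mul_assoc, hcta]
      linarith [htri, h2.trans_eq this]
    have hid : N + β * (N / (1 - β)) = N / (1 - β) := by
      field_simp
      ring
    simp only [hg]
    rw [hcta]
    linarith [hbound.trans_eq hid]
  have hgt : g t ≤ 0 := by
    simp only [hg]
    simp [hN.symm ▸ hN0]
  -- existence via IVT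
  obtain ⟨tr, htr_mem, htr⟩ : ∃ tr ∈ Set.Icc a t, g tr = 0 := by
    have := intermediate_value_Icc' hat hgc.continuousOn
    have h0 : (0 : ℝ) ∈ Set.Icc (g t) (g a) := ⟨hgt, hga⟩
    obtain ⟨x, hx, hx0⟩ := this h0
    exact ⟨x, hx, hx0⟩
  have htr_eq : c * (t - tr) = ‖s - q tr‖ := by
    have : c * (t - tr) - ‖s - q tr‖ = 0 := htr
    linarith
  refine ⟨⟨tr, htr_eq, ?_⟩, ?_⟩
  · intro y hy
    have hgy : g y = 0 := by simp only [hg]; linarith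
    rcases lt_trichotomy y tr with h | h | h
    · exact absurd (hmono y tr h) (by rw [hgy, htr]; simp)
    · exact h
    · exact absurd (hmono tr y h) (by rw [hgy, htr]; simp)
  · intro x hx
    have := norm_nonneg (s - q x)
    nlinarith [hx]
end

section
/- Let b > 0 and let E, B ∈ EuclideanSpace ℝ (Fin 3) be such that Q := 1 − (‖E‖² − ‖B‖²)/b² − ⟪E,B⟫²/b⁴ > 0. Define the Born–Infeld fields H := (B − b⁻²·⟪B,E⟫·E)/√Q and D := (E + b⁻²·⟪B,E⟫·B)/√Q, and set R := 1 + (‖B‖² + ‖D‖²)/b² + ‖B × D‖²/b⁴. Then the inverted Born–Infeld vacuum law holds: E = (D − b⁻²·(B × (B × D)))/√R and H = (B − b⁻²·(D × (D × B)))/√R. -/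
/-- The cross product on three-dimensional Euclidean space. -/
noncomputable def cross3 (a b : EuclideanSpace ℝ (Fin 3)) : EuclideanSpace ℝ (Fin 3) :=
  (EuclideanSpace.equiv (Fin 3) ℝ).symm
    ![a 1 * b 2 - a 2 * b 1, a 2 * b 0 - a 0 * b 2, a 0 * b 1 - a 1 * b 0]

lemma cross3_apply (a c : EuclideanSpace ℝ (Fin 3)) (i : Fin 3) :
    cross3 a c i = ![a 1 * c 2 - a 2 * c 1, a 2 * c 0 - a 0 * c 2, a 0 * c 1 - a 1 * c 0] i := rfl

lemma cross_triple (a c : EuclideanSpace ℝ (Fin 3)) :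
    cross3 a (cross3 a c) = (inner ℝ a c : ℝ) • a - (inner ℝ a a : ℝ) • c := by
  ext i
  fin_cases i <;>
    simp [cross3_apply, PiLp.inner_apply, Fin.sum_univ_three, PiLp.smul_apply, PiLp.sub_apply,
      EuclideanSpace.norm_sq_eq, Real.norm_eq_abs, sq_abs] <;>
    ring

lemma cross_norm (a c : EuclideanSpace ℝ (Fin 3)) :
    ‖cross3 a c‖ ^ 2 = (inner ℝ a a : ℝ) * (inner ℝ c c : ℝ) - (inner ℝ a c : ℝ) ^ 2 := by
  rw [← real_inner_self_eq_norm_sq]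
  simp [cross3_apply, PiLp.inner_apply, Fin.sum_univ_three, EuclideanSpace.norm_sq_eq,
    Real.norm_eq_abs, sq_abs]
  ring


/-- **Inversion of the Born–Infeld vacuum law.**
If `H` and `D` are defined from `(E,B)` by the Born–Infeld law (with `Q > 0`), then
`(E,H)` may conversely be expressed in terms of `(B,D)` by the inverted law. -/
theorem born_infeld_law_inversion
    (b : ℝ) (hb : 0 < b) (E B : EuclideanSpace ℝ (Fin 3))
    (Q : ℝ) (hQdef : Q = 1 - (‖E‖ ^ 2 - ‖B‖ ^ 2) / b ^ 2 - (inner ℝ E B : ℝ) ^ 2 / b ^ 4)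
    (hQ : 0 < Q)
    (H D : EuclideanSpace ℝ (Fin 3))
    (hH : H = (Real.sqrt Q)⁻¹ • (B - (b ^ 2)⁻¹ • ((inner ℝ B E : ℝ) • E)))
    (hD : D = (Real.sqrt Q)⁻¹ • (E + (b ^ 2)⁻¹ • ((inner ℝ B E : ℝ) • B)))
    (R : ℝ) (hR : R = 1 + (‖B‖ ^ 2 + ‖D‖ ^ 2) / b ^ 2 + ‖cross3 B D‖ ^ 2 / b ^ 4) :
    E = (Real.sqrt R)⁻¹ • (D - (b ^ 2)⁻¹ • cross3 B (cross3 B D)) ∧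
    H = (Real.sqrt R)⁻¹ • (B - (b ^ 2)⁻¹ • cross3 D (cross3 D B)) := by
  set s := Real.sqrt Q with hs_def
  have hs0 : 0 < s := Real.sqrt_pos.2 hQ
  have hs2 : s ^ 2 = Q := Real.sq_sqrt hQ.le
  set β : ℝ := inner ℝ B E with hβ
  set nB : ℝ := inner ℝ B B with hnB
  set eE : ℝ := inner ℝ E E with heE
  have hbne : b ≠ 0 := hb.ne'
  have hsne : s ≠ 0 := hs0.ne'
  have hnormB : ‖B‖ ^ 2 = nB := (real_inner_self_eq_norm_sq B).symm
  have hnormE : ‖E‖ ^ 2 = eE := (real_inner_self_eq_norm_sq E).symm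
  have hEB : (inner ℝ E B : ℝ) = β := real_inner_comm B E
  have hnB0 : 0 ≤ nB := real_inner_self_nonneg
  have hkey : s ^ 2 * b ^ 4 = b ^ 4 - (eE - nB) * b ^ 2 - β ^ 2 := by
    rw [hs2, hQdef, hnormB, hnormE, hEB]; field_simp
  set k : ℝ := 1 + nB / b ^ 2 with hk
  have hk0 : 0 < k := by positivity
  have hBD : (inner ℝ B D : ℝ) = s⁻¹ * (β * k) := by
    simp only [hD, inner_add_right, real_inner_smul_right, ← hβ, ← hnB, hk]
    field_simp
  have hDB : (inner ℝ D B : ℝ) = s⁻¹ * (β * k) := by rw [real_inner_comm, hBD]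
  have hDD : (inner ℝ D D : ℝ) = s⁻¹ ^ 2 * (eE + 2 * β ^ 2 / b ^ 2 + β ^ 2 * nB / b ^ 4) := by
    simp only [hD, inner_add_left, inner_add_right, real_inner_smul_left, real_inner_smul_right,
      ← hβ, ← hnB, ← heE, hEB]
    field_simp; ring
  have hRval : R = (k / s) ^ 2 := by
    rw [hR, cross_norm, hnormB, ← real_inner_self_eq_norm_sq, ← hnB, hDD, hBD, hk]
    field_simp
    linear_combination (b^2*(nB+b^2)) * hkey
  have hsqrtR : Real.sqrt R = k / s := by
    rw [hRval, Real.sqrt_sq (by positivity)]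
  have hsqrtRinv : (Real.sqrt R)⁻¹ = s / k := by
    rw [hsqrtR]; field_simp
  constructor
  · rw [hsqrtRinv, cross_triple, hBD, ← hnB, hD, hk]
    match_scalars <;> (field_simp; try ring1)
  · rw [hsqrtRinv, cross_triple, hDB, hDD, hH, hD, hk]
    match_scalars <;> (field_simp; try ring1)
    linear_combination (-(b ^ 2)) * hkey
end

section
/- Let b > 0 and let E, B ∈ EuclideanSpace ℝ (Fin 3) satisfy b⁴ − b²(‖E‖² − ‖B‖²) − ⟪E,B⟫² > 0. Define the Born–Infeld Lagrangian density ℒ(E,B) := b² − √(b⁴ − b²(‖E‖² − ‖B‖²) − ⟪E,B⟫²). Then the gradient of the map E ↦ ℒ(E,B) at E equals (E + b⁻²·⟪E,B⟫·B)/√Q, and the gradient of the map B ↦ ℒ(E,B) at B equals −(B − b⁻²·⟪E,B⟫·E)/√Q, where Q := 1 − (‖E‖² − ‖B‖²)/b² − ⟪E,B⟫²/b⁴. (That is, D = ∂ℒ/∂E and H = −∂ℒ/∂B recover the Born–Infeld vacuum law.) -/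
open Real

lemma bi_aux {F : Type*} [NormedAddCommGroup F] [InnerProductSpace ℝ F] [CompleteSpace F]
    (v x : F) (A c d K : ℝ)
    (hpos : 0 < A + c * ‖x‖ ^ 2 + d * (inner ℝ x v : ℝ) ^ 2) :
    HasGradientAt (fun y => K - Real.sqrt (A + c * ‖y‖ ^ 2 + d * (inner ℝ y v : ℝ) ^ 2))
      ((-(Real.sqrt (A + c * ‖x‖ ^ 2 + d * (inner ℝ x v : ℝ) ^ 2))⁻¹) •
        (c • x + (d * (inner ℝ x v : ℝ)) • v)) x := by
  set fx : ℝ := A + c * ‖x‖ ^ 2 + d * (inner ℝ x v : ℝ) ^ 2 with hfx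
  have hs : 0 < Real.sqrt fx := Real.sqrt_pos.2 hpos
  have h1 : HasFDerivAt (fun y : F => (inner ℝ y v : ℝ)) (innerSL ℝ v) x := by
    exact (innerSL ℝ v).hasFDerivAt.congr_of_eventuallyEq
      (Filter.Eventually.of_forall fun y => real_inner_comm v y)
  have hnorm : HasFDerivAt (fun y : F => ‖y‖ ^ 2)
      (2 • (innerSL ℝ x).comp (ContinuousLinearMap.id ℝ F)) x := by
    simpa using (hasFDerivAt_id x).norm_sq
  have hsq : HasFDerivAt (fun y : F => (inner ℝ y v : ℝ) ^ 2)
      ((inner ℝ x v : ℝ) • innerSL ℝ v + (inner ℝ x v : ℝ) • innerSL ℝ v) x := by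
    have := h1.mul h1
    simp only [sq]
    convert this using 1
    · rfl
    · rfl
    · funext y; simp [sq]
  have hf : HasFDerivAt (fun y : F => A + c * ‖y‖ ^ 2 + d * (inner ℝ y v : ℝ) ^ 2)
      ((c • (2 • (innerSL ℝ x).comp (ContinuousLinearMap.id ℝ F))) +
        d • ((inner ℝ x v : ℝ) • innerSL ℝ v + (inner ℝ x v : ℝ) • innerSL ℝ v)) x := by
    have := ((hasFDerivAt_const A x).add (hnorm.const_smul c)).add (hsq.const_smul d)
    convert this using 1
    · rfl
    · rfl
    · funext y; simp [smul_eq_mul]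
    · simp
  have hsqrt := (Real.hasDerivAt_sqrt (ne_of_gt hpos)).comp_hasFDerivAt x hf
  have hfinal := hsqrt.const_sub K
  rw [hasGradientAt_iff_hasFDerivAt]
  convert hfinal using 1
  · rfl
  · rfl
  · rfl
  ext y
  simp only [InnerProductSpace.toDual_apply_apply, ContinuousLinearMap.neg_apply,
    ContinuousLinearMap.smul_apply, ContinuousLinearMap.add_apply,
    ContinuousLinearMap.coe_smul', Pi.smul_apply, ContinuousLinearMap.coe_comp',
    ContinuousLinearMap.coe_id', Function.comp_apply, id_eq, innerSL_apply_apply,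
    inner_add_left, inner_smul_left, real_inner_comm x y, real_inner_comm v y,
    RCLike.star_def, conj_trivial, smul_eq_mul, two_smul, one_div]
  field_simp
  ring

/-- **The Born–Infeld vacuum law from the Born–Infeld Lagrangian.**
For the Born–Infeld Lagrangian density `ℒ(E,B) = b² − √(b⁴ − b²(‖E‖²−‖B‖²) − ⟪E,B⟫²)`,
the gradient in `E` is `D = (E + b⁻²⟪E,B⟫B)/√Q` and the gradient in `B` is
`−H = −(B − b⁻²⟪E,B⟫E)/√Q`. -/
theorem born_infeld_lagrangian_gradients
    (b : ℝ) (hb : 0 < b) (E B : EuclideanSpace ℝ (Fin 3))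
    (hpos : 0 < b ^ 4 - b ^ 2 * (‖E‖ ^ 2 - ‖B‖ ^ 2) - (inner ℝ E B : ℝ) ^ 2)
    (L : EuclideanSpace ℝ (Fin 3) → EuclideanSpace ℝ (Fin 3) → ℝ)
    (hL : ∀ E' B' : EuclideanSpace ℝ (Fin 3),
      L E' B' = b ^ 2 -
        Real.sqrt (b ^ 4 - b ^ 2 * (‖E'‖ ^ 2 - ‖B'‖ ^ 2) - (inner ℝ E' B' : ℝ) ^ 2))
    (Q : ℝ) (hQ : Q = 1 - (‖E‖ ^ 2 - ‖B‖ ^ 2) / b ^ 2 - (inner ℝ E B : ℝ) ^ 2 / b ^ 4) :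
    HasGradientAt (fun E' => L E' B)
      ((Real.sqrt Q)⁻¹ • (E + (b ^ 2)⁻¹ • ((inner ℝ E B : ℝ) • B))) E ∧
    HasGradientAt (fun B' => L E B')
      (-((Real.sqrt Q)⁻¹ • (B - (b ^ 2)⁻¹ • ((inner ℝ E B : ℝ) • E)))) B := by
  have hb2 : (0 : ℝ) < b ^ 2 := pow_pos hb 2
  have hb4 : (0 : ℝ) < b ^ 4 := pow_pos hb 4
  -- the two sqrt arguments, in the normal form used by `bi_aux`
  have hpos1 : 0 < (b ^ 4 + b ^ 2 * ‖B‖ ^ 2) + (-(b ^ 2)) * ‖E‖ ^ 2 +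
      (-1) * (inner ℝ E B : ℝ) ^ 2 := by
    have : (b ^ 4 + b ^ 2 * ‖B‖ ^ 2) + (-(b ^ 2)) * ‖E‖ ^ 2 + (-1) * (inner ℝ E B : ℝ) ^ 2
        = b ^ 4 - b ^ 2 * (‖E‖ ^ 2 - ‖B‖ ^ 2) - (inner ℝ E B : ℝ) ^ 2 := by ring
    rw [this]; exact hpos
  have hpos2 : 0 < (b ^ 4 - b ^ 2 * ‖E‖ ^ 2) + b ^ 2 * ‖B‖ ^ 2 +
      (-1) * (inner ℝ B E : ℝ) ^ 2 := by
    have : (b ^ 4 - b ^ 2 * ‖E‖ ^ 2) + b ^ 2 * ‖B‖ ^ 2 + (-1) * (inner ℝ B E : ℝ) ^ 2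
        = b ^ 4 - b ^ 2 * (‖E‖ ^ 2 - ‖B‖ ^ 2) - (inner ℝ E B : ℝ) ^ 2 := by
      rw [real_inner_comm E B]; ring
    rw [this]; exact hpos
  -- relation between the sqrt argument and Q
  have hQpos : 0 < Q := by
    have h1 : 0 < b ^ 4 * Q := by
      have : b ^ 4 * Q = b ^ 4 - b ^ 2 * (‖E‖ ^ 2 - ‖B‖ ^ 2) - (inner ℝ E B : ℝ) ^ 2 := by
        rw [hQ]; field_simp
      rw [this]; exact hpos
    nlinarith
  have hsQ : 0 < Real.sqrt Q := Real.sqrt_pos.2 hQpos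
  have hsqrtb4 : Real.sqrt (b ^ 4 * Q) = b ^ 2 * Real.sqrt Q := by
    rw [Real.sqrt_mul (le_of_lt hb4), show b ^ 4 = (b ^ 2) ^ 2 by ring,
      Real.sqrt_sq (le_of_lt (pow_pos hb 2))]
  constructor
  · have key := bi_aux B E (b ^ 4 + b ^ 2 * ‖B‖ ^ 2) (-(b ^ 2)) (-1) (b ^ 2) hpos1
    have heq : (fun E' => L E' B) = fun y => b ^ 2 -
        Real.sqrt ((b ^ 4 + b ^ 2 * ‖B‖ ^ 2) + (-(b ^ 2)) * ‖y‖ ^ 2 +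
          (-1) * (inner ℝ y B : ℝ) ^ 2) := by
      funext y
      rw [hL, show b ^ 4 - b ^ 2 * (‖y‖ ^ 2 - ‖B‖ ^ 2) - (inner ℝ y B : ℝ) ^ 2
        = (b ^ 4 + b ^ 2 * ‖B‖ ^ 2) + (-(b ^ 2)) * ‖y‖ ^ 2 + (-1) * (inner ℝ y B : ℝ) ^ 2
        from by ring]
    rw [heq]
    convert key using 1
    rw [show (b ^ 4 + b ^ 2 * ‖B‖ ^ 2) + (-(b ^ 2)) * ‖E‖ ^ 2 + (-1) * (inner ℝ E B : ℝ) ^ 2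
      = b ^ 4 * Q from by rw [hQ]; field_simp; ring, hsqrtb4]
    match_scalars <;> (field_simp; try (left; ring))
  · have key := bi_aux E B (b ^ 4 - b ^ 2 * ‖E‖ ^ 2) (b ^ 2) (-1) (b ^ 2) hpos2
    have heq : (fun B' => L E B') = fun y => b ^ 2 -
        Real.sqrt ((b ^ 4 - b ^ 2 * ‖E‖ ^ 2) + b ^ 2 * ‖y‖ ^ 2 +
          (-1) * (inner ℝ y E : ℝ) ^ 2) := by
      funext y
      rw [hL, real_inner_comm E y, show b ^ 4 - b ^ 2 * (‖E‖ ^ 2 - ‖y‖ ^ 2) -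
          (inner ℝ E y : ℝ) ^ 2
        = (b ^ 4 - b ^ 2 * ‖E‖ ^ 2) + b ^ 2 * ‖y‖ ^ 2 + (-1) * (inner ℝ E y : ℝ) ^ 2
        from by ring]
    rw [heq]
    convert key using 1
    rw [show (b ^ 4 - b ^ 2 * ‖E‖ ^ 2) + b ^ 2 * ‖B‖ ^ 2 + (-1) * (inner ℝ B E : ℝ) ^ 2
      = b ^ 4 * Q from by rw [hQ, real_inner_comm E B]; field_simp; ring, hsqrtb4,
      real_inner_comm B E]
    match_scalars <;> (field_simp; try (left; ring))
end

section
/- Let c > 0, m ∈ ℝ with m ≠ 0, and let v ∈ EuclideanSpace ℝ (Fin 3) with ‖v‖ < c. Set p := (m/√(1 − ‖v‖²/c²))·v. Then the map φ(w) := (m/√(1 − ‖w‖²/c²))·w is Fréchet differentiable at v with derivative L given by L(a) = (m/√(1 − ‖v‖²/c²))·(a + (⟪v,a⟫/(c² − ‖v‖²))·v), and the matrix W[p] defined by W[p](f) := (1/(m·√(1 + ‖p‖²/(m²c²))))·(f − (⟪p,f⟫/(m²c² + ‖p‖²))·p) inverts this derivative: W[p](L(a)) = a for every a ∈ EuclideanSpace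 ℝ (Fin 3). -/
private abbrev E3 := EuclideanSpace ℝ (Fin 3)

set_option maxHeartbeats 1000000 in
/-- **Fréchet derivative of the relativistic velocity–momentum map and its inverse matrix.**
The map `φ(w) = m·w/√(1 − ‖w‖²/c²)` is differentiable at `v` (with `‖v‖ < c`), its
derivative is `L(a) = (m/√(1 − ‖v‖²/c²))·(a + (⟪v,a⟫/(c² − ‖v‖²))·v)`, and the matrix
`W[p](f) = (1/(m√(1+‖p‖²/(m²c²))))·(f − (⟪p,f⟫/(m²c²+‖p‖²))·p)`, with
`p = m·v/√(1 − ‖v‖²/c²)`, inverts this derivative. -/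
theorem velocity_momentum_derivative_inverted_by_W
    (c m : ℝ) (hc : 0 < c) (hm : m ≠ 0)
    (v : EuclideanSpace ℝ (Fin 3)) (hv : ‖v‖ < c)
    (p : EuclideanSpace ℝ (Fin 3)) (hp : p = (m / Real.sqrt (1 - ‖v‖ ^ 2 / c ^ 2)) • v)
    (W : EuclideanSpace ℝ (Fin 3) → EuclideanSpace ℝ (Fin 3) → EuclideanSpace ℝ (Fin 3))
    (hW : ∀ p' f : EuclideanSpace ℝ (Fin 3),
      W p' f = (1 / (m * Real.sqrt (1 + ‖p'‖ ^ 2 / (m ^ 2 * c ^ 2)))) •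
        (f - ((inner ℝ p' f : ℝ) / (m ^ 2 * c ^ 2 + ‖p'‖ ^ 2)) • p')) :
    ∃ L : EuclideanSpace ℝ (Fin 3) →L[ℝ] EuclideanSpace ℝ (Fin 3),
      (∀ a : EuclideanSpace ℝ (Fin 3),
        L a = (m / Real.sqrt (1 - ‖v‖ ^ 2 / c ^ 2)) •
          (a + ((inner ℝ v a : ℝ) / (c ^ 2 - ‖v‖ ^ 2)) • v)) ∧
      HasFDerivAt (fun w : EuclideanSpace ℝ (Fin 3) =>
          (m / Real.sqrt (1 - ‖w‖ ^ 2 / c ^ 2)) • w) L v ∧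
      ∀ a : EuclideanSpace ℝ (Fin 3), W p (L a) = a := by
  have hnv : 0 ≤ ‖v‖ := norm_nonneg v
  have hs : ‖v‖ ^ 2 < c ^ 2 := by nlinarith
  have hd : 0 < 1 - ‖v‖ ^ 2 / c ^ 2 := by
    rw [sub_pos, div_lt_one (by positivity)]; exact hs
  set d : ℝ := 1 - ‖v‖ ^ 2 / c ^ 2 with hd_def
  set r : ℝ := Real.sqrt d with hr_def
  have hr : 0 < r := Real.sqrt_pos.mpr hd
  have hr2 : r ^ 2 = d := by rw [hr_def]; exact Real.sq_sqrt hd.le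
  have hcd : c ^ 2 * d = c ^ 2 - ‖v‖ ^ 2 := by
    rw [hd_def]; field_simp
  refine ⟨(m / r) • (ContinuousLinearMap.id ℝ E3 +
      ((c ^ 2 - ‖v‖ ^ 2)⁻¹ • ((innerSL ℝ v).smulRight v))), ?_, ?_, ?_⟩
  · intro a
    simp only [ContinuousLinearMap.smul_apply, ContinuousLinearMap.add_apply,
      ContinuousLinearMap.id_apply, ContinuousLinearMap.smulRight_apply, innerSL_apply_apply,
      smul_smul, ← hr_def]
    rw [div_eq_inv_mul, div_eq_inv_mul]
  · -- differentiability
    have h1 : HasFDerivAt (fun w : E3 => ‖w‖ ^ 2) (2 • (innerSL ℝ v)) v := by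
      simpa using (hasFDerivAt_id v).norm_sq
    have hd' : (1 : ℝ) - ‖v‖ ^ 2 * (c ^ 2)⁻¹ = d := by rw [hd_def, div_eq_mul_inv]
    have hN := (h1.mul_const ((c ^ 2)⁻¹)).const_sub 1
    have hsq := (Real.hasDerivAt_sqrt (by rw [hd']; exact hd.ne')).comp_hasFDerivAt v hN
    have hinv := (hasDerivAt_inv (show Real.sqrt (1 - ‖v‖ ^ 2 * (c ^ 2)⁻¹) ≠ 0 from
      (by rw [hd', ← hr_def]; exact hr.ne'))).comp_hasFDerivAt v hsq
    have hg := hinv.const_mul m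
    have hmain := hg.smul (hasFDerivAt_id v)
    have heq : (fun w : E3 => (m / Real.sqrt (1 - ‖w‖ ^ 2 / c ^ 2)) • w)
        = (fun w : E3 => (m * (Real.sqrt (1 - ‖w‖ ^ 2 * (c ^ 2)⁻¹))⁻¹) • id w) := by
      funext w; rw [div_eq_mul_inv, div_eq_mul_inv]; rfl
    rw [heq]
    refine hmain.congr_fderiv ?_
    refine ContinuousLinearMap.ext fun a => ?_
    simp only [ContinuousLinearMap.add_apply, ContinuousLinearMap.smul_apply,
      ContinuousLinearMap.smulRight_apply, ContinuousLinearMap.id_apply,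
      ContinuousLinearMap.coe_smul', Pi.smul_apply, innerSL_apply_apply,
      ContinuousLinearMap.coe_comp', Function.comp_apply, smul_eq_mul,
      ContinuousLinearMap.neg_apply, smul_smul, Function.comp_apply, id_eq]
    rw [hd', ← hr_def, ← hcd, smul_add, smul_smul]
    congr 1
    simp only [nsmul_eq_mul, Nat.cast_ofNat]
    rw [← hr2]
    field_simp
  · -- inversion
    intro a
    have hpn : ‖p‖ ^ 2 = m ^ 2 * ‖v‖ ^ 2 / d := by
      rw [hp, norm_smul, Real.norm_eq_abs, mul_pow, sq_abs, div_pow, hr2]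
      ring
    have key1 : 1 + ‖p‖ ^ 2 / (m ^ 2 * c ^ 2) = 1 / d := by
      rw [hpn]
      clear_value d r
      field_simp [hc.ne', hd.ne']
      linear_combination hcd
    have key2 : m ^ 2 * c ^ 2 + ‖p‖ ^ 2 = m ^ 2 * c ^ 2 / d := by
      rw [hpn]; clear_value d r; field_simp [hc.ne', hd.ne']; linear_combination hcd
    have hsqrt : Real.sqrt (1 + ‖p‖ ^ 2 / (m ^ 2 * c ^ 2)) = 1 / r := by
      rw [key1]
      simp only [one_div]
      rw [Real.sqrt_inv, ← hr_def]
    rw [hW, hsqrt, key2]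
    set t : ℝ := (inner ℝ v a : ℝ) / (c ^ 2 - ‖v‖ ^ 2) with ht
    have hLa : (((m / r) • (ContinuousLinearMap.id ℝ E3 +
        ((c ^ 2 - ‖v‖ ^ 2)⁻¹ • ((innerSL ℝ v).smulRight v)))) a : E3)
        = (m / r) • (a + t • v) := by
      simp only [ContinuousLinearMap.smul_apply, ContinuousLinearMap.add_apply,
        ContinuousLinearMap.id_apply, ContinuousLinearMap.smulRight_apply, innerSL_apply_apply,
        smul_smul, ht]
      rw [div_eq_inv_mul, div_eq_inv_mul]
    rw [hLa, hp]
    have hinner : (inner ℝ ((m / r) • v) ((m / r) • (a + t • v)) : ℝ)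
        = (m / r) ^ 2 * ((inner ℝ v a : ℝ) + t * ‖v‖ ^ 2) := by
      rw [real_inner_smul_left, real_inner_smul_right, inner_add_right,
        real_inner_smul_right, real_inner_self_eq_norm_sq]
      ring
    rw [hinner]
    have hip : (m / r) ^ 2 * ((inner ℝ v a : ℝ) + t * ‖v‖ ^ 2) / (m ^ 2 * c ^ 2 / d)
        = t := by
      rw [ht, ← hcd, ← hr2,
        show (‖v‖ : ℝ) ^ 2 = c ^ 2 - c ^ 2 * r ^ 2 by rw [hr2]; linarith [hcd]]
      field_simp
      ring
    rw [hip]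
    have h1 : (m / r) • (a + t • v) - t • ((m / r) • v) = (m / r) • a := by
      rw [smul_add, smul_comm t (m / r), add_sub_cancel_right]
    rw [h1, smul_smul]
    rw [show (1 / (m * (1 / r)) * (m / r)) = 1 by field_simp]
    rw [one_smul]
end

section
/- Let q ∈ EuclideanSpace ℝ (Fin 3), e ∈ ℝ, let d : EuclideanSpace ℝ (Fin 3) → EuclideanSpace ℝ (Fin 3) be continuous and bounded, and let B : EuclideanSpace ℝ (Fin 3) → EuclideanSpace ℝ (Fin 3) be continuous with compact support. Then the field momentum density s ↦ (−e·‖s − q‖⁻³·(s − q) + d(s)) × B(s) (cross product taken componentwise after identifying EuclideanSpace ℝ (Fin 3) with Fin 3 → ℝ) is integrable over all of EuclideanSpace ℝ (Fin 3). In particular, for initial field data consisting of the Coulomb field of a point charge plus a bounded continuous regular field, together with a continuous compactly supported magnetic field, the total field momentum ∫ D × B is well-defined. -/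
open MeasureTheory Metric Set
open scoped ENNReal

lemma cross3_add_left (a a' b : EuclideanSpace ℝ (Fin 3)) :
    cross3 (a + a') b = cross3 a b + cross3 a' b := by
  ext i
  fin_cases i <;> simp [cross3, PiLp.add_apply] <;> ring

lemma cross3_zero_right (a : EuclideanSpace ℝ (Fin 3)) : cross3 a 0 = 0 := by
  ext i
  fin_cases i <;> simp [cross3]

lemma continuous_cross3 :
    Continuous fun p : EuclideanSpace ℝ (Fin 3) × EuclideanSpace ℝ (Fin 3) =>
      cross3 p.1 p.2 := by
  unfold cross3
  refine (EuclideanSpace.equiv (Fin 3) ℝ).symm.continuous.comp (continuous_pi fun i => ?_)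
  have hc : ∀ j : Fin 3,
      Continuous fun p : EuclideanSpace ℝ (Fin 3) × EuclideanSpace ℝ (Fin 3) => p.1 j :=
    fun j => (EuclideanSpace.proj j).continuous.comp continuous_fst
  have hc' : ∀ j : Fin 3,
      Continuous fun p : EuclideanSpace ℝ (Fin 3) × EuclideanSpace ℝ (Fin 3) => p.2 j :=
    fun j => (EuclideanSpace.proj j).continuous.comp continuous_snd
  fin_cases i <;> simp <;>
    exact ((hc _).mul (hc' _)).sub ((hc _).mul (hc' _))

lemma norm_cross3_le (a b : EuclideanSpace ℝ (Fin 3)) : ‖cross3 a b‖ ≤ ‖a‖ * ‖b‖ := by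
  have hsq : ∀ x : EuclideanSpace ℝ (Fin 3), ‖x‖ ^ 2 = x 0 ^ 2 + x 1 ^ 2 + x 2 ^ 2 := fun x => by
    rw [EuclideanSpace.norm_eq, Real.sq_sqrt (by positivity), Fin.sum_univ_three]
    simp [sq_abs]
  have h2 : ‖cross3 a b‖ ^ 2 ≤ (‖a‖ * ‖b‖) ^ 2 := by
    rw [mul_pow, hsq, hsq, hsq]
    have e0 : cross3 a b 0 = a 1 * b 2 - a 2 * b 1 := rfl
    have e1 : cross3 a b 1 = a 2 * b 0 - a 0 * b 2 := rfl
    have e2 : cross3 a b 2 = a 0 * b 1 - a 1 * b 0 := rfl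
    rw [e0, e1, e2]
    nlinarith [sq_nonneg (a 0 * b 0 + a 1 * b 1 + a 2 * b 2)]
  calc ‖cross3 a b‖ = √(‖cross3 a b‖ ^ 2) := (Real.sqrt_sq (norm_nonneg _)).symm
    _ ≤ √((‖a‖ * ‖b‖) ^ 2) := Real.sqrt_le_sqrt h2
    _ = ‖a‖ * ‖b‖ := Real.sqrt_sq (by positivity)

lemma integrableOn_inv_norm_sq (q : EuclideanSpace ℝ (Fin 3)) (R : ℝ) :
    IntegrableOn (fun s : EuclideanSpace ℝ (Fin 3) => (‖s - q‖ ^ 2)⁻¹)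
      (closedBall q R) := by
  set μ := volume.restrict (closedBall q R) with hμ
  have hmeas : Measurable fun s : EuclideanSpace ℝ (Fin 3) => (‖s - q‖ ^ 2)⁻¹ :=
    (((measurable_id.sub measurable_const).norm.pow_const 2)).inv
  refine ⟨hmeas.aestronglyMeasurable, ?_⟩
  have h0 : ∀ s : EuclideanSpace ℝ (Fin 3), 0 ≤ (‖s - q‖ ^ 2)⁻¹ := fun s => by positivity
  rw [HasFiniteIntegral, lintegral_enorm_of_nonneg h0]
  rw [lintegral_eq_lintegral_meas_le μ (Filter.Eventually.of_forall h0) hmeas.aemeasurable]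
  set mB := volume (ball (0 : EuclideanSpace ℝ (Fin 3)) 1) with hmB
  have hdim : Module.finrank ℝ (EuclideanSpace ℝ (Fin 3)) = 3 := by simp
  calc ∫⁻ t in Set.Ioi (0:ℝ), μ {a | t ≤ (‖a - q‖ ^ 2)⁻¹}
      ≤ ∫⁻ t in Set.Ioc (0:ℝ) 1 ∪ Set.Ioi 1, μ {a | t ≤ (‖a - q‖ ^ 2)⁻¹} :=
        lintegral_mono_set Ioi_subset_Ioc_union_Ioi
    _ ≤ (∫⁻ t in Set.Ioc (0:ℝ) 1, μ {a | t ≤ (‖a - q‖ ^ 2)⁻¹})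
        + ∫⁻ t in Set.Ioi (1:ℝ), μ {a | t ≤ (‖a - q‖ ^ 2)⁻¹} := lintegral_union_le _ _ _
    _ < ∞ := by
        refine ENNReal.add_lt_top.2 ⟨?_, ?_⟩
        · calc ∫⁻ t in Set.Ioc (0:ℝ) 1, μ {a | t ≤ (‖a - q‖ ^ 2)⁻¹}
              ≤ ∫⁻ _ in Set.Ioc (0:ℝ) 1, volume (closedBall q R) := by
                refine lintegral_mono fun t => ?_
                exact le_trans (measure_mono (subset_univ _))
                  (le_of_eq (by rw [hμ, Measure.restrict_apply_univ]))
            _ = volume (closedBall q R) * volume (Set.Ioc (0:ℝ) 1) := setLIntegral_const _ _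
            _ < ∞ := ENNReal.mul_lt_top measure_closedBall_lt_top (by simp)
        · have hsub : ∀ t : ℝ, 1 < t →
              {a : EuclideanSpace ℝ (Fin 3) | t ≤ (‖a - q‖ ^ 2)⁻¹}
                ⊆ closedBall q (t ^ (-(1/2) : ℝ)) := by
            intro t ht a ha
            simp only [mem_setOf_eq] at ha
            have ht0 : (0:ℝ) < t := lt_trans one_pos ht
            rw [mem_closedBall, dist_eq_norm]
            set r := ‖a - q‖ with hr
            have hr0 : 0 ≤ r := norm_nonneg _
            have hrpos : 0 < (r ^ 2)⁻¹ := lt_of_lt_of_le ht0 ha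
            have hr2 : 0 < r ^ 2 := by
              by_contra h
              push_neg at h
              have : r ^ 2 = 0 := le_antisymm h (by positivity)
              rw [this] at hrpos; simp at hrpos
            have hle : r ^ 2 ≤ t⁻¹ := by
              have h1 : r ^ 2 * t ≤ 1 := by
                have := mul_le_mul_of_nonneg_left ha hr2.le
                rwa [mul_inv_cancel₀ hr2.ne'] at this
              have h2 : t⁻¹ * t = 1 := inv_mul_cancel₀ ht0.ne'
              nlinarith
            have hpow : (t ^ (-(1/2) : ℝ)) ^ 2 = t⁻¹ := by
              rw [← Real.rpow_natCast (t ^ (-(1/2):ℝ)) 2, ← Real.rpow_mul ht0.le]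
              norm_num [Real.rpow_neg_one]
            have : r ^ 2 ≤ (t ^ (-(1/2) : ℝ)) ^ 2 := by rw [hpow]; exact hle
            calc r = √(r ^ 2) := (Real.sqrt_sq hr0).symm
              _ ≤ √((t ^ (-(1/2) : ℝ)) ^ 2) := Real.sqrt_le_sqrt this
              _ = t ^ (-(1/2) : ℝ) := Real.sqrt_sq (Real.rpow_nonneg ht0.le _)
          calc ∫⁻ t in Set.Ioi (1:ℝ), μ {a | t ≤ (‖a - q‖ ^ 2)⁻¹}
              ≤ ∫⁻ t in Set.Ioi (1:ℝ), ENNReal.ofReal (t ^ (-(3/2) : ℝ)) * mB := by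
                refine setLIntegral_mono (by fun_prop) fun t ht => ?_
                have ht1 : (1:ℝ) < t := ht
                have ht0 : (0:ℝ) < t := lt_trans one_pos ht1
                calc μ {a | t ≤ (‖a - q‖ ^ 2)⁻¹}
                    ≤ volume {a : EuclideanSpace ℝ (Fin 3) | t ≤ (‖a - q‖ ^ 2)⁻¹} :=
                      Measure.restrict_le_self _
                  _ ≤ volume (closedBall q (t ^ (-(1/2) : ℝ))) :=
                      measure_mono (hsub t ht1)
                  _ = ENNReal.ofReal ((t ^ (-(1/2) : ℝ)) ^
                        Module.finrank ℝ (EuclideanSpace ℝ (Fin 3))) * mB :=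
                      volume.addHaar_closedBall q (Real.rpow_nonneg ht0.le _)
                  _ = ENNReal.ofReal (t ^ (-(3/2) : ℝ)) * mB := by
                      congr 1
                      rw [hdim, ← Real.rpow_natCast (t ^ (-(1/2):ℝ)) 3,
                        ← Real.rpow_mul ht0.le]
                      norm_num
            _ = (∫⁻ t in Set.Ioi (1:ℝ), ENNReal.ofReal (t ^ (-(3/2) : ℝ))) * mB :=
                lintegral_mul_const' _ _ measure_ball_lt_top.ne
            _ < ∞ := ENNReal.mul_lt_top
                ((integrableOn_Ioi_rpow_of_lt (by norm_num) one_pos).setLIntegral_lt_top)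
                measure_ball_lt_top

/-- **The field momentum density `D × B` of a Coulomb-plus-regular field is integrable:**
for `D(s) = −e(s−q)/‖s−q‖³ + d(s)` with `d` bounded and continuous, and `B` continuous
with compact support, the momentum density `s ↦ D(s) × B(s)` is integrable over `ℝ³`. -/
theorem coulomb_field_momentum_density_integrable
    (q : EuclideanSpace ℝ (Fin 3)) (e : ℝ)
    (d B : EuclideanSpace ℝ (Fin 3) → EuclideanSpace ℝ (Fin 3))
    (hd : Continuous d) (hdbdd : ∃ C : ℝ, ∀ s, ‖d s‖ ≤ C)
    (hB : Continuous B) (hBsupp : HasCompactSupport B) :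
    MeasureTheory.Integrable
      (fun s : EuclideanSpace ℝ (Fin 3) =>
        cross3 ((-e * (‖s - q‖ ^ 3)⁻¹) • (s - q) + d s) (B s)) := by
  obtain ⟨M, hM⟩ := hB.bounded_above_of_compact_support hBsupp
  have hM0 : 0 ≤ M := le_trans (norm_nonneg _) (hM q)
  -- split off the two parts
  have hsplit : (fun s : EuclideanSpace ℝ (Fin 3) =>
      cross3 ((-e * (‖s - q‖ ^ 3)⁻¹) • (s - q) + d s) (B s))
      = fun s => cross3 ((-e * (‖s - q‖ ^ 3)⁻¹) • (s - q)) (B s) + cross3 (d s) (B s) :=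
    funext fun s => cross3_add_left _ _ _
  rw [hsplit]
  -- the regular part is continuous with compact support
  have hg2cont : Continuous fun s => cross3 (d s) (B s) :=
    continuous_cross3.comp (hd.prodMk hB)
  have hg2supp : HasCompactSupport fun s => cross3 (d s) (B s) := by
    refine hBsupp.mono ?_
    intro s hs
    simp only [Function.mem_support] at hs ⊢
    intro h
    exact hs (by rw [h, cross3_zero_right])
  have hg2 : Integrable (fun s => cross3 (d s) (B s)) :=
    hg2cont.integrable_of_hasCompactSupport hg2supp
  -- the Coulomb part
  obtain ⟨R, hR⟩ := hBsupp.isBounded.subset_closedBall q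
  have hmeas1 : AEStronglyMeasurable
      (fun s : EuclideanSpace ℝ (Fin 3) =>
        cross3 ((-e * (‖s - q‖ ^ 3)⁻¹) • (s - q)) (B s)) volume := by
    have m1 : Measurable fun s : EuclideanSpace ℝ (Fin 3) =>
        (-e * (‖s - q‖ ^ 3)⁻¹) • (s - q) :=
      ((((measurable_id.sub measurable_const).norm.pow_const 3).inv.const_mul
        (-e))).smul (measurable_id.sub measurable_const)
    exact (continuous_cross3.measurable.comp (m1.prodMk hB.measurable)).aestronglyMeasurable
  have hbound : Integrable
      (Set.indicator (tsupport B)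
        (fun s : EuclideanSpace ℝ (Fin 3) => |e| * (‖s - q‖ ^ 2)⁻¹ * M)) := by
    rw [integrable_indicator_iff (isClosed_tsupport B).measurableSet]
    exact (((integrableOn_inv_norm_sq q R).mono_set hR).const_mul |e|).mul_const M
  have hg1 : Integrable
      (fun s => cross3 ((-e * (‖s - q‖ ^ 3)⁻¹) • (s - q)) (B s)) := by
    refine hbound.mono' hmeas1 (Filter.Eventually.of_forall fun s => ?_)
    by_cases hs : s ∈ tsupport B
    · rw [Set.indicator_of_mem hs]
      calc ‖cross3 ((-e * (‖s - q‖ ^ 3)⁻¹) • (s - q)) (B s)‖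
          ≤ ‖(-e * (‖s - q‖ ^ 3)⁻¹) • (s - q)‖ * ‖B s‖ := norm_cross3_le _ _
        _ ≤ (|e| * (‖s - q‖ ^ 2)⁻¹) * M := by
            refine mul_le_mul ?_ (hM s) (norm_nonneg _) (by positivity)
            rw [norm_smul]
            rcases eq_or_ne ‖s - q‖ 0 with h | h
            · simp [h]
            · have hpos : 0 < ‖s - q‖ := lt_of_le_of_ne (norm_nonneg _) (Ne.symm h)
              rw [Real.norm_eq_abs, abs_mul, abs_neg, abs_inv, abs_pow,
                abs_of_nonneg (norm_nonneg (s - q))]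
              rw [mul_assoc]
              refine mul_le_mul_of_nonneg_left (le_of_eq ?_) (abs_nonneg e)
              field_simp
        _ = |e| * (‖s - q‖ ^ 2)⁻¹ * M := by ring
    · rw [Set.indicator_of_notMem hs, image_eq_zero_of_notMem_tsupport hs,
        cross3_zero_right]
      simp
  exact hg1.add hg2
end

section
/- Let κ > 0 and let u : (Fin 3 → ℝ) → ℝ be twice continuously differentiable, satisfying the screened Poisson (Helmholtz-type) equation Δu(x) = κ²·u(x) for all x, where Δu(x) := Σᵢ ∂²u/∂xᵢ²(x), and suppose u(x) → 0 as ‖x‖ → ∞ (i.e., u tends to 0 along the cocompact filter). Then u is identically zero. In particular, the elliptic equation (1 − κ⁻²Δ)B = F arising in the MBLTP initial-value formulation has at most one solution vanishing at spatial infinity. -/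
open Filter Set Topology

/-- One-dimensional second derivative test: if `g` has a global maximum at `0`,
`g' = h` everywhere and `h' (0) = d`, then `d ≤ 0`. -/
lemma second_deriv_nonpos_of_max {g h : ℝ → ℝ} {d : ℝ}
    (hgh : ∀ t, HasDerivAt g (h t) t) (hh : HasDerivAt h d 0)
    (hmax : ∀ t, g t ≤ g 0) : d ≤ 0 := by
  by_contra hd
  push_neg at hd
  have h0 : h 0 = 0 := by
    have hloc : IsLocalMax g 0 :=
      IsMaxOn.isLocalMax (fun t _ => hmax t) univ_mem
    have := hloc.deriv_eq_zero
    rwa [(hgh 0).deriv] at this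
  have hslope : Tendsto (slope h 0) (𝓝[≠] 0) (𝓝 d) :=
    hasDerivAt_iff_tendsto_slope.mp hh
  have hslope' : Tendsto (slope h 0) (𝓝[>] (0:ℝ)) (𝓝 d) :=
    hslope.mono_left (nhdsWithin_mono _ (fun x hx => ne_of_gt hx))
  have hpos : ∀ᶠ t in 𝓝[>] (0:ℝ), 0 < slope h 0 t :=
    hslope'.eventually (eventually_gt_nhds hd)
  have hpos' : ∀ᶠ t in 𝓝[>] (0:ℝ), 0 < h t := by
    filter_upwards [hpos, self_mem_nhdsWithin] with t hst ht
    have hslt : slope h 0 t = h t / t := by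
      simp [slope_def_field, h0]
    rw [hslt] at hst
    have : 0 < (h t / t) * t := mul_pos hst ht
    rwa [div_mul_cancel₀ _ (ne_of_gt ht)] at this
  obtain ⟨ε, hε, hsub⟩ := mem_nhdsGT_iff_exists_Ioo_subset.mp hpos'
  have hε0 : (0:ℝ) < ε := hε
  have hgc : Continuous g :=
    (Differentiable.continuous fun t => (hgh t).differentiableAt)
  have hmono : StrictMonoOn g (Icc 0 ε) := by
    apply strictMonoOn_of_deriv_pos (convex_Icc 0 ε) hgc.continuousOn
    intro x hx
    rw [interior_Icc] at hx
    rw [(hgh x).deriv]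
    exact hsub hx
  have : g 0 < g ε :=
    hmono (left_mem_Icc.mpr hε0.le) (right_mem_Icc.mpr hε0.le) hε0
  exact absurd (hmax ε) (not_le.mpr this)

/-- Derivative of a function along a line. -/
lemma line_hasDerivAt {f : (Fin 3 → ℝ) → ℝ} (hf : Differentiable ℝ f)
    (p e : Fin 3 → ℝ) (t : ℝ) :
    HasDerivAt (fun s : ℝ => f (p + s • e)) (fderiv ℝ f (p + t • e) e) t := by
  have hL : HasDerivAt (fun s : ℝ => p + s • e) e t := by
    simpa using ((hasDerivAt_id t).smul_const e).const_add p
  exact (hf (p + t • e)).hasFDerivAt.comp_hasDerivAt t hL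

/-- Half of the maximum principle: a decaying solution is nonpositive. -/
lemma screened_poisson_nonpos
    (κ : ℝ) (hκ : 0 < κ)
    (u : (Fin 3 → ℝ) → ℝ) (hu : ContDiff ℝ 2 u)
    (heq : ∀ x : Fin 3 → ℝ,
      (∑ i : Fin 3, fderiv ℝ (fun y => fderiv ℝ u y (Pi.single i 1)) x (Pi.single i 1)) =
        κ ^ 2 * u x)
    (hdecay : Filter.Tendsto u (Filter.cocompact (Fin 3 → ℝ)) (nhds 0)) :
    ∀ x : Fin 3 → ℝ, u x ≤ 0 := by
  by_contra hcon
  push_neg at hcon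
  obtain ⟨x₀, hx₀⟩ := hcon
  have hcont : Continuous u := hu.continuous
  have hev : ∀ᶠ x in cocompact (Fin 3 → ℝ), u x ≤ u x₀ :=
    (hdecay.eventually (gt_mem_nhds hx₀)).mono fun x h => le_of_lt h
  obtain ⟨p, hp⟩ := hcont.exists_forall_ge' x₀ hev
  have hup : 0 < u p := lt_of_lt_of_le hx₀ (hp x₀)
  have hud : Differentiable ℝ u := hu.differentiable two_ne_zero
  -- each second directional derivative at the max is ≤ 0
  have hterm : ∀ i : Fin 3,
      fderiv ℝ (fun y => fderiv ℝ u y (Pi.single i 1)) p (Pi.single i 1) ≤ 0 := by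
    intro i
    set e : Fin 3 → ℝ := Pi.single i 1 with he
    set w : (Fin 3 → ℝ) → ℝ := fun y => fderiv ℝ u y e with hw
    have hwc : ContDiff ℝ 1 w :=
      (hu.fderiv_right (by norm_num)).clm_apply contDiff_const
    have hwd : Differentiable ℝ w := hwc.differentiable one_ne_zero
    have hgh : ∀ t : ℝ, HasDerivAt (fun s : ℝ => u (p + s • e)) (w (p + t • e)) t :=
      fun t => line_hasDerivAt hud p e t
    have hh : HasDerivAt (fun s : ℝ => w (p + s • e)) (fderiv ℝ w p e) 0 := by
      have := line_hasDerivAt hwd p e 0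
      simpa using this
    have hmax : ∀ t : ℝ, u (p + t • e) ≤ u (p + (0:ℝ) • e) := by
      intro t
      simpa using hp (p + t • e)
    exact second_deriv_nonpos_of_max hgh hh hmax
  have hsum : (∑ i : Fin 3,
      fderiv ℝ (fun y => fderiv ℝ u y (Pi.single i 1)) p (Pi.single i 1)) ≤ 0 :=
    Finset.sum_nonpos fun i _ => hterm i
  have hrhs : 0 < κ ^ 2 * u p := mul_pos (pow_pos hκ 2) hup
  rw [heq p] at hsum
  linarith

/-- **Uniqueness of decaying solutions of the screened Poisson equation:** a `C²`
solution of `Δu = κ²u` on `ℝ³` (with `κ > 0`) which tends to `0` at spatial infinity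
is identically zero. -/
theorem screened_poisson_decaying_solution_unique
    (κ : ℝ) (hκ : 0 < κ)
    (u : (Fin 3 → ℝ) → ℝ) (hu : ContDiff ℝ 2 u)
    (heq : ∀ x : Fin 3 → ℝ,
      (∑ i : Fin 3, fderiv ℝ (fun y => fderiv ℝ u y (Pi.single i 1)) x (Pi.single i 1)) =
        κ ^ 2 * u x)
    (hdecay : Filter.Tendsto u (Filter.cocompact (Fin 3 → ℝ)) (nhds 0)) :
    ∀ x : Fin 3 → ℝ, u x = 0 := by
  have h1 : ∀ x, u x ≤ 0 := screened_poisson_nonpos κ hκ u hu heq hdecay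
  have h2 : ∀ x, -u x ≤ 0 := by
    have hneq : ∀ x : Fin 3 → ℝ,
        (∑ i : Fin 3, fderiv ℝ (fun y => fderiv ℝ (fun z => -u z) y (Pi.single i 1)) x
          (Pi.single i 1)) = κ ^ 2 * (-u x) := by
      intro x
      have key : ∀ i : Fin 3,
          fderiv ℝ (fun y => fderiv ℝ (fun z => -u z) y (Pi.single i 1)) x (Pi.single i 1)
          = -(fderiv ℝ (fun y => fderiv ℝ u y (Pi.single i 1)) x (Pi.single i 1)) := by
        intro i
        have h1' : (fun y => fderiv ℝ (fun z => -u z) y (Pi.single i 1))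
            = fun y => -(fderiv ℝ u y (Pi.single i 1)) := by
          funext y
          rw [fderiv_fun_neg]
          simp
        rw [h1', fderiv_fun_neg]
        simp
      rw [Finset.sum_congr rfl fun i _ => key i, Finset.sum_neg_distrib, heq x]
      ring
    have hndecay : Filter.Tendsto (fun z => -u z) (Filter.cocompact (Fin 3 → ℝ)) (nhds 0) := by
      simpa using hdecay.neg
    exact screened_poisson_nonpos κ hκ (fun z => -u z) hu.neg hneq hndecay
  intro x
  have := h2 x
  have := h1 x
  linarith
end

section
/- Let q : ℝ → EuclideanSpace ℝ (Fin 3) be continuously differentiable. Then for every smooth compactly supported test function φ : ℝ × EuclideanSpace ℝ (Fin 3) → ℝ, one has ∫_ℝ ( ∂ₜφ(t, q(t)) + ⟪q'(t), ∇ₛφ(t, q(t))⟫ ) dt = 0, where ∂ₜφ is the partial derivative of φ in its first (time) argument and ∇ₛφ is the gradient of φ in its second (space) argument. In other words, the charge density ρ(t,s) = −e·δ_{q(t)}(s) and current density j(t,s) = −e·v(t)·δ_{q(t)}(s) of a point charge moving along a C¹ trajectory automatically satisfy the continuity equation ∂ₜρ + ∇·j = 0 in the sense of distributions. -/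
open Set MeasureTheory

/-- **The point-charge densities satisfy the continuity equation distributionally:**
for a `C¹` trajectory `q` and every smooth compactly supported test function `φ(t,s)`,
`∫ (∂ₜφ(t, q t) + ⟪q'(t), ∇ₛφ(t, q t)⟫) dt = 0`; i.e. `ρ(t,s) = −e δ_{q(t)}(s)` and
`j(t,s) = −e q'(t) δ_{q(t)}(s)` satisfy `∂ₜρ + ∇·j = 0` in the sense of distributions. -/
theorem point_charge_continuity_equation
    (q : ℝ → EuclideanSpace ℝ (Fin 3)) (hq : ContDiff ℝ 1 q)
    (φ : ℝ × EuclideanSpace ℝ (Fin 3) → ℝ)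
    (hφ : ContDiff ℝ (⊤ : ℕ∞) φ) (hsupp : HasCompactSupport φ) :
    ∫ t : ℝ, (deriv (fun τ => φ (τ, q t)) t +
      (inner ℝ (deriv q t) (gradient (fun y => φ (t, y)) (q t)) : ℝ)) = 0 := by
  set g : ℝ → ℝ × EuclideanSpace ℝ (Fin 3) := fun t => (t, q t) with hg
  have hgC : ContDiff ℝ 1 g := contDiff_id.prodMk hq
  set f : ℝ → ℝ := fun t => φ (g t) with hf
  have hfC : ContDiff ℝ 1 f := (hφ.of_le (by exact_mod_cast le_top)).comp hgC
  -- compact support of f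
  have hfsupp : HasCompactSupport f := by
    have hsub : tsupport f ⊆ g ⁻¹' tsupport φ := by
      apply closure_minimal
      · intro t ht
        exact subset_closure ht
      · exact (hsupp.isClosed.preimage hgC.continuous)
    have hsub2 : g ⁻¹' tsupport φ ⊆ Prod.fst '' tsupport φ := by
      intro t ht
      exact ⟨g t, ht, rfl⟩
    exact IsCompact.of_isClosed_subset (hsupp.image continuous_fst)
      (isClosed_tsupport f) (hsub.trans hsub2)
  -- pointwise identity: the integrand equals deriv f
  have key : ∀ t, deriv f t = deriv (fun τ => φ (τ, q t)) t +
      (inner ℝ (deriv q t) (gradient (fun y => φ (t, y)) (q t)) : ℝ) := by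
    intro t
    have hφd : HasFDerivAt φ (fderiv ℝ φ (g t)) (g t) :=
      (hφ.differentiable (by simp) (g t)).hasFDerivAt
    set L := fderiv ℝ φ (g t) with hL
    have hqd : HasDerivAt q (deriv q t) t :=
      ((hq.differentiable one_ne_zero) t).hasDerivAt
    have hgd : HasDerivAt g (1, deriv q t) t :=
      HasDerivAt.prodMk (hasDerivAt_id t) hqd
    have hfd : HasDerivAt f (L (1, deriv q t)) t := hφd.comp_hasDerivAt t hgd
    -- partial time derivative
    have h1 : HasDerivAt (fun τ => φ (τ, q t)) (L (1, 0)) t := by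
      have : HasDerivAt (fun τ => (τ, q t)) ((1 : ℝ), (0 : EuclideanSpace ℝ (Fin 3))) t :=
        HasDerivAt.prodMk (hasDerivAt_id t) (hasDerivAt_const t (q t))
      exact HasFDerivAt.comp_hasDerivAt (f := fun τ => (τ, q t)) t hφd this
    -- space gradient
    have h2 : HasFDerivAt (fun y => φ (t, y)) (L.comp (ContinuousLinearMap.inr ℝ ℝ _)) (q t) := by
      have : HasFDerivAt (fun y : EuclideanSpace ℝ (Fin 3) => (t, y))
          (ContinuousLinearMap.inr ℝ ℝ (EuclideanSpace ℝ (Fin 3))) (q t) :=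
        HasFDerivAt.prodMk (hasFDerivAt_const t (q t)) (hasFDerivAt_id (q t))
      exact hφd.comp (q t) this
    have h2g : HasGradientAt (fun y => φ (t, y))
        ((InnerProductSpace.toDual ℝ _).symm (L.comp (ContinuousLinearMap.inr ℝ ℝ _))) (q t) :=
      hasFDerivAt_iff_hasGradientAt.mp h2
    have hgradeq := h2g.gradient
    rw [hfd.deriv, h1.deriv, hgradeq]
    have : (inner ℝ (deriv q t)
        ((InnerProductSpace.toDual ℝ _).symm (L.comp (ContinuousLinearMap.inr ℝ ℝ _))) : ℝ)
        = L (0, deriv q t) := by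
      rw [real_inner_comm, ← InnerProductSpace.toDual_apply_apply,
        (InnerProductSpace.toDual ℝ _).apply_symm_apply]
      rfl
    rw [this, ← map_add]
    norm_num
  have : (∫ t : ℝ, (deriv (fun τ => φ (τ, q t)) t +
      (inner ℝ (deriv q t) (gradient (fun y => φ (t, y)) (q t)) : ℝ)))
      = ∫ t : ℝ, deriv f t := by
    congr 1
    ext t
    exact (key t).symm
  rw [this]
  have h1 := hfsupp.integral_Iic_deriv_eq hfC 0
  have h2 := hfsupp.integral_Ioi_deriv_eq hfC 0
  have hint : Integrable (deriv f) :=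
    (hfC.continuous_deriv le_rfl).integrable_of_hasCompactSupport hfsupp.deriv
  have := intervalIntegral.integral_Iic_add_Ioi (μ := volume) (b := (0:ℝ))
    hint.integrableOn hint.integrableOn
  rw [← this, h1, h2]
  ring
end
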